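/- Let ω ∈ D = D̂ ∩ Ď be a radial weight. Then there exist r > 0 and C ≥ 1 such that for all z ∈ 𝔻 and all w ∈ D(z,r): C⁻¹ B_z^ω(z) ≤ |B_z^ω(w)| ≤ C B_z^ω(z). -/

import Mathlib

open MeasureTheory Filter Set Complex ENNReal

noncomputable section
set_option maxHeartbeats 1600000

/-- The open unit disk in `ℂ`. -/
def uD : Set ℂ := Metric.ball 0 1

/-- The normalized Lebesgue area measure `dA` on `ℂ` (Lebesgue measure divided by `π`,
so that the unit disk has measure `1`). -/
def mA : Measure ℂ := ENNReal.ofReal (1 / Real.pi) • (volume : Measure ℂ)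

/-- `ω̂(r) = ∫_r^1 ω(s) ds` for a radial weight profile `ω : ℝ → ℝ`. -/
def wHat (ω : ℝ → ℝ) (r : ℝ) : ℝ := ∫ s in r..(1:ℝ), ω s

/-- A radial weight, identified with its radial profile: positive on `[0,1)` and integrable. -/
def IsRadialWeight (ω : ℝ → ℝ) : Prop :=
  (∀ r ∈ Ico (0:ℝ) 1, 0 < ω r) ∧ IntervalIntegrable ω volume 0 1

/-- `ω ∈ D̂`: doubling. -/
def IsDoubling (ω : ℝ → ℝ) : Prop :=
  ∃ C : ℝ, 0 < C ∧ ∀ r ∈ Ico (0:ℝ) 1, wHat ω r ≤ C * wHat ω ((1 + r) / 2)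

/-- `ω ∈ Ď`: reverse doubling. -/
def IsRevDoubling (ω : ℝ → ℝ) : Prop :=
  ∃ K : ℝ, 1 < K ∧ ∃ C : ℝ, 1 < C ∧ ∀ r ∈ Ico (0:ℝ) 1,
    C * wHat ω (1 - (1 - r) / K) ≤ wHat ω r

/-- `ω ∈ D = D̂ ∩ Ď`. -/
def IsDD (ω : ℝ → ℝ) : Prop := IsDoubling ω ∧ IsRevDoubling ω

/-- The moment `ω_n = ∫_0^1 r^n ω(r) dr`. -/
def wMom (ω : ℝ → ℝ) (n : ℕ) : ℝ := ∫ r in (0:ℝ)..1, r ^ n * ω r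

/-- The Bergman reproducing kernel `B_z^ω(w) = (1/2) Σ_k (w z̄)^k / ω_{2k+1}`. -/
def wBk (ω : ℝ → ℝ) (z w : ℂ) : ℂ :=
  (1 / 2) * ∑' k : ℕ, (w * (starRingEnd ℂ) z) ^ k / (wMom ω (2 * k + 1) : ℂ)

/-- The diagonal value `B_z^ω(z) = Σ_k |z|^{2k} / (2 ω_{2k+1}) = ‖B_z^ω‖²`. -/
def wBkDiag (ω : ℝ → ℝ) (z : ℂ) : ℝ :=
  ∑' k : ℕ, ‖z‖ ^ (2 * k) / (2 * wMom ω (2 * k + 1))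

/-- Pseudo-hyperbolic distance `ρ(z,w)`. -/
def pRho (z w : ℂ) : ℝ := ‖(z - w) / (1 - (starRingEnd ℂ) z * w)‖

/-- The Bergman metric `β(z,w)`. -/
def bDist (z w : ℂ) : ℝ := (1 / 2) * Real.log ((1 + pRho z w) / (1 - pRho z w))

/-- The Bergman disk `D(z,r)`. -/
def bDisk (z : ℂ) (r : ℝ) : Set ℂ := {w ∈ uD | bDist z w < r}

/-- The annulus `Λ_k = {z : 1 - 2⁻ᵏ ≤ |z| < 1 - 2⁻ᵏ⁻¹}`. -/
def annl (k : ℕ) : Set ℂ :=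
  {z : ℂ | 1 - 1 / 2 ^ k ≤ ‖z‖ ∧ ‖z‖ < 1 - 1 / 2 ^ (k + 1)}

/-- The Möbius invariant measure `dλ(z) = dA(z)/(1-|z|²)²` on the unit disk. -/
def mLam : Measure ℂ :=
  (mA.restrict uD).withDensity fun z => ENNReal.ofReal (1 / (1 - ‖z‖ ^ 2) ^ 2)

/-- `L^p` norm with respect to `λ` restricted to a set, for `0 < p ≤ ∞`. -/
def eLpLam (p : ℝ≥0∞) (f : ℂ → ℝ≥0∞) (s : Set ℂ) : ℝ≥0∞ :=
  if p = ∞ then essSup f (mLam.restrict s)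
  else (∫⁻ z in s, f z ^ p.toReal ∂mLam) ^ (1 / p.toReal)

/-- `ℓ^q` norm of a sequence in `[0,∞]`, for `0 ≤ q ≤ ∞`, where `q = 0` means `limsup`. -/
def lqN (q : ℝ≥0∞) (a : ℕ → ℝ≥0∞) : ℝ≥0∞ :=
  if q = 0 then Filter.limsup a Filter.atTop
  else if q = ∞ then ⨆ k, a k
  else (∑' k, a k ^ q.toReal) ^ (1 / q.toReal)

/-- `ℓ^p` norm of a sequence in `[0,∞]`, for `0 < p ≤ ∞`. -/
def lpN (p : ℝ≥0∞) (a : ℕ → ℝ≥0∞) : ℝ≥0∞ :=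
  if p = ∞ then ⨆ j, a j else (∑' j, a j ^ p.toReal) ^ (1 / p.toReal)

/-- The Herz norm `‖f‖_{K_q^p(λ)}`. -/
def herzN (p q : ℝ≥0∞) (f : ℂ → ℝ≥0∞) : ℝ≥0∞ := lqN q fun k => eLpLam p f (annl k)

/-- `μ̂_r(z) = μ(D(z,r)) / ((1-|z|) ω̂(z))`. -/
def muHat (ω : ℝ → ℝ) (μ : Measure ℂ) (r : ℝ) (z : ℂ) : ℝ≥0∞ :=
  μ (bDisk z r) / ENNReal.ofReal ((1 - ‖z‖) * wHat ω (‖z‖))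

/-- The Berezin transform `T̃_μ(z) = (1/B_z^ω(z)) ∫_𝔻 |B_z^ω(w)|² dμ(w)`. -/
def berezin (ω : ℝ → ℝ) (μ : Measure ℂ) (z : ℂ) : ℝ≥0∞ :=
  (∫⁻ w, ENNReal.ofReal (‖wBk ω z w‖ ^ 2) ∂μ) / ENNReal.ofReal (wBkDiag ω z)

/-- `B_ω f(z) = (1/B_z^ω(z)) ∫_𝔻 f(w) |B_z^ω(w)|² ω̂(w)/(1-|w|) dA(w)` for `f ≥ 0`. -/
def Bop (ω : ℝ → ℝ) (f : ℂ → ℝ≥0∞) (z : ℂ) : ℝ≥0∞ :=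
  (∫⁻ w in uD, f w *
      ENNReal.ofReal (‖wBk ω z w‖ ^ 2 * wHat ω (‖w‖) / (1 - ‖w‖))
      ∂mA) / ENNReal.ofReal (wBkDiag ω z)

/-- The `A_ω²` norm of a function on the disk. -/
def a2Norm (ω : ℝ → ℝ) (f : ℂ → ℂ) : ℝ≥0∞ :=
  (∫⁻ z in uD, ENNReal.ofReal (‖f z‖ ^ 2 * ω (‖z‖)) ∂mA) ^ (1 / 2 : ℝ)

/-- Membership in the Bergman space `A_ω²`: analytic on the disk with finite norm. -/
def MemA2 (ω : ℝ → ℝ) (f : ℂ → ℂ) : Prop :=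
  AnalyticOnNhd ℂ f uD ∧ a2Norm ω f < ∞

/-- Operator norm on `A_ω²` of a (not necessarily linear) map `T`. -/
def opNormA2 (ω : ℝ → ℝ) (T : (ℂ → ℂ) → ℂ → ℂ) : ℝ≥0∞ :=
  ⨆ f ∈ {f : ℂ → ℂ | MemA2 ω f ∧ a2Norm ω f ≤ 1}, a2Norm ω (T f)

/-- `R` is linear on `A_ω²` (as functions on the disk). -/
def LinOnA2 (ω : ℝ → ℝ) (R : (ℂ → ℂ) → ℂ → ℂ) : Prop :=
  ∀ f g : ℂ → ℂ, MemA2 ω f → MemA2 ω g → ∀ a b : ℂ, ∀ z ∈ uD,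
    R (fun w => a * f w + b * g w) z = a * R f z + b * R g z

/-- `R` has rank at most `j` on `A_ω²`: its range (on the disk) lies in the span of
`j` functions. -/
def RankLE (ω : ℝ → ℝ) (R : (ℂ → ℂ) → ℂ → ℂ) (j : ℕ) : Prop :=
  ∃ g : Fin j → ℂ → ℂ, ∀ f : ℂ → ℂ, MemA2 ω f →
    ∃ c : Fin j → ℂ, ∀ z ∈ uD, R f z = ∑ i : Fin j, c i * g i z

/-- The `j`-th approximation number `λ_j(T) = inf {‖T - R‖ : rank R ≤ j}`. -/
def appNum (ω : ℝ → ℝ) (T : (ℂ → ℂ) → ℂ → ℂ) (j : ℕ) : ℝ≥0∞ :=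
  ⨅ R ∈ {R : (ℂ → ℂ) → ℂ → ℂ |
      LinOnA2 ω R ∧ RankLE ω R j ∧ ∀ f, MemA2 ω f → MemA2 ω (R f)},
    opNormA2 ω fun f z => T f z - R f z

/-- The Schatten `p`-norm `‖T‖_{S_p}`, `0 < p ≤ ∞` (`p = ∞` being the operator norm). -/
def schattenN (ω : ℝ → ℝ) (p : ℝ≥0∞) (T : (ℂ → ℂ) → ℂ → ℂ) : ℝ≥0∞ :=
  if p = ∞ then opNormA2 ω T
  else (∑' j : ℕ, appNum ω T j ^ p.toReal) ^ (1 / p.toReal)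

/-- The Toeplitz operator `T_μ f(z) = ∫ f(ξ) conj(B_z^ω(ξ)) dμ(ξ)`. -/
def toep (ω : ℝ → ℝ) (μ : Measure ℂ) (f : ℂ → ℂ) (z : ℂ) : ℂ :=
  ∫ ξ, f ξ * (starRingEnd ℂ) (wBk ω z ξ) ∂μ

/-- The Schatten–Herz norm `‖T_μ‖_{S_{p,q}} = ‖{‖T_{μχ_k}‖_{S_p}}_k‖_{ℓ^q}`. -/
def sHerzNorm (ω : ℝ → ℝ) (p q : ℝ≥0∞) (μ : Measure ℂ) : ℝ≥0∞ :=
  lqN q fun k => schattenN ω p (toep ω (μ.restrict (annl k)))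

/-- `T_μ ∈ S_{p,q}`: each `T_{μχ_k}` maps `A_ω²` into itself, lies in `S_p`, and the
`ℓ^q` norm of the Schatten norms is finite. -/
def MemSpq (ω : ℝ → ℝ) (p q : ℝ≥0∞) (μ : Measure ℂ) : Prop :=
  (∀ k : ℕ, ∀ f, MemA2 ω f → MemA2 ω (toep ω (μ.restrict (annl k)) f)) ∧
  (∀ k : ℕ, schattenN ω p (toep ω (μ.restrict (annl k))) < ∞) ∧
  sHerzNorm ω p q μ < ∞

/-- The dyadic polar rectangle `R_{j,k}`. -/
def Rjk (j k : ℕ) : Set ℂ :=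
  {z ∈ uD | (∃ θ : ℝ, 2 * Real.pi * k / 2 ^ j ≤ θ ∧ θ < 2 * Real.pi * (k + 1) / 2 ^ j ∧
      z / (‖z‖ : ℂ) = Complex.exp ((θ : ℂ) * Complex.I)) ∧
    1 - 1 / 2 ^ j ≤ ‖z‖ ∧ ‖z‖ < 1 - 1 / 2 ^ (j + 1)}

namespace S16
open intervalIntegral

variable {ω : ℝ → ℝ}

lemma ae_ne_one {a b : ℝ} : ∀ᵐ r ∂(volume.restrict (Set.Icc a b)), r ≠ (1:ℝ) := by
  refine ae_restrict_of_ae ?_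
  rw [ae_iff]
  convert measure_singleton (1:ℝ) using 2
  · ext x; simp [not_not]
  · infer_instance

/-- a.e.-comparison on `[a,b] ⊆ [0,1]` where the inequality may fail at `r = 1`. -/
lemma integral_mono_aux {f g : ℝ → ℝ} {a b : ℝ} (hab : a ≤ b)
    (hf : IntervalIntegrable f volume a b) (hg : IntervalIntegrable g volume a b)
    (h : ∀ r ∈ Set.Icc a b, r ≠ 1 → f r ≤ g r) :
    (∫ r in a..b, f r) ≤ ∫ r in a..b, g r := by
  refine integral_mono_ae_restrict hab hf hg ?_
  filter_upwards [ae_ne_one, ae_restrict_mem measurableSet_Icc] with r h1 h2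
  exact h r h2 h1

/-- interval integrability of `r^n * ω r` on subintervals of `[0,1]`. -/
lemma intInt (hω : IsRadialWeight ω) (n : ℕ) {a b : ℝ}
    (ha : 0 ≤ a) (ha' : a ≤ 1) (hb : 0 ≤ b) (hb' : b ≤ 1) :
    IntervalIntegrable (fun r => r ^ n * ω r) volume a b := by
  refine (hω.2.mono_set ?_).continuousOn_mul (Continuous.continuousOn (by continuity))
  rw [Set.uIcc_of_le (by norm_num : (0:ℝ) ≤ 1)]
  exact Set.uIcc_subset_Icc ⟨ha, ha'⟩ ⟨hb, hb'⟩

lemma intInt' (hω : IsRadialWeight ω) {a b : ℝ}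
    (ha : 0 ≤ a) (ha' : a ≤ 1) (hb : 0 ≤ b) (hb' : b ≤ 1) :
    IntervalIntegrable ω volume a b := by
  refine hω.2.mono_set ?_
  rw [Set.uIcc_of_le (by norm_num : (0:ℝ) ≤ 1)]
  exact Set.uIcc_subset_Icc ⟨ha, ha'⟩ ⟨hb, hb'⟩

lemma wHat_antitone (hω : IsRadialWeight ω) {a b : ℝ} (ha : 0 ≤ a) (hab : a ≤ b) (hb : b ≤ 1) :
    wHat ω b ≤ wHat ω a := by
  have h1 : IntervalIntegrable ω volume a b := intInt' hω ha (hab.trans hb) (ha.trans hab) hb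
  have h2 : IntervalIntegrable ω volume b 1 := intInt' hω (ha.trans hab) hb zero_le_one le_rfl
  have hsplit : (∫ r in a..b, ω r) + (∫ r in b..1, ω r) = ∫ r in a..(1:ℝ), ω r :=
    integral_add_adjacent_intervals h1 h2
  have hnn : 0 ≤ ∫ r in a..b, ω r := by
    rw [← intervalIntegral.integral_zero (a := a) (b := b) (μ := volume)]
    refine integral_mono_aux hab (intervalIntegrable_const) h1 ?_
    intro r hr hr1
    exact (hω.1 r ⟨ha.trans hr.1, lt_of_le_of_ne (hr.2.trans hb) hr1⟩).le
  unfold wHat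
  linarith [hsplit]

lemma wHat_nonneg (hω : IsRadialWeight ω) {a : ℝ} (ha : 0 ≤ a) (ha' : a ≤ 1) :
    0 ≤ wHat ω a := by
  have := wHat_antitone hω ha ha' le_rfl
  have h1 : wHat ω 1 = 0 := by unfold wHat; simp
  linarith

lemma wHat_pos (hω : IsRadialWeight ω) {a : ℝ} (ha : 0 ≤ a) (ha' : a < 1) :
    0 < wHat ω a := by
  refine intervalIntegral.intervalIntegral_pos_of_pos_on
    (intInt' hω ha ha'.le zero_le_one le_rfl) ?_ ha'
  intro x hx
  exact hω.1 x ⟨ha.trans hx.1.le, hx.2⟩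

lemma wMom_anti (hω : IsRadialWeight ω) {m n : ℕ} (hmn : m ≤ n) :
    wMom ω n ≤ wMom ω m := by
  refine integral_mono_aux (by norm_num) (intInt hω n le_rfl zero_le_one zero_le_one le_rfl)
    (intInt hω m le_rfl zero_le_one zero_le_one le_rfl) ?_
  intro r hr hr1
  have hω' := (hω.1 r ⟨hr.1, lt_of_le_of_ne hr.2 hr1⟩).le
  exact mul_le_mul_of_nonneg_right (pow_le_pow_of_le_one hr.1 hr.2 hmn) hω'

lemma wMom_pos (hω : IsRadialWeight ω) (n : ℕ) : 0 < wMom ω n := by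
  refine intervalIntegral.intervalIntegral_pos_of_pos_on
    (intInt hω n le_rfl zero_le_one zero_le_one le_rfl) ?_ (by norm_num)
  intro x hx
  exact mul_pos (pow_pos hx.1 n) (hω.1 x ⟨hx.1.le, hx.2⟩)

lemma wMom_le_wHat_zero (hω : IsRadialWeight ω) (n : ℕ) : wMom ω n ≤ wHat ω 0 := by
  refine integral_mono_aux (by norm_num) (intInt hω n le_rfl zero_le_one zero_le_one le_rfl)
    (intInt' hω le_rfl zero_le_one zero_le_one le_rfl) ?_
  intro r hr hr1
  have hω' := (hω.1 r ⟨hr.1, lt_of_le_of_ne hr.2 hr1⟩).le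
  nlinarith [pow_le_one₀ hr.1 hr.2 (n := n)]


lemma integral_nonneg_aux {f : ℝ → ℝ} {a b : ℝ} (hab : a ≤ b)
    (hf : IntervalIntegrable f volume a b)
    (h : ∀ r ∈ Set.Icc a b, r ≠ 1 → 0 ≤ f r) : 0 ≤ ∫ r in a..b, f r := by
  have h0 : (∫ r in a..b, (0:ℝ)) ≤ ∫ r in a..b, f r :=
    integral_mono_aux hab intervalIntegrable_const hf h
  simpa using h0

/-- `ω_n ≤ ρ^(n-n') ω_{n'} + ω̂(ρ)`. -/
lemma wMom_split (hω : IsRadialWeight ω) {n n' : ℕ} (hn : n' ≤ n) {ρ : ℝ}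
    (hρ0 : 0 ≤ ρ) (hρ1 : ρ ≤ 1) :
    wMom ω n ≤ ρ ^ (n - n') * wMom ω n' + wHat ω ρ := by
  have h1 : IntervalIntegrable (fun r => r ^ n * ω r) volume 0 ρ := intInt hω n le_rfl zero_le_one hρ0 hρ1
  have h2 : IntervalIntegrable (fun r => r ^ n * ω r) volume ρ 1 := intInt hω n hρ0 hρ1 zero_le_one le_rfl
  have hsplit : (∫ r in (0:ℝ)..ρ, r ^ n * ω r) + (∫ r in ρ..1, r ^ n * ω r) = wMom ω n :=
    integral_add_adjacent_intervals h1 h2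
  have hA : (∫ r in (0:ℝ)..ρ, r ^ n * ω r) ≤ ρ ^ (n - n') * wMom ω n' := by
    have step1 : (∫ r in (0:ℝ)..ρ, r ^ n * ω r) ≤ ∫ r in (0:ℝ)..ρ, ρ ^ (n - n') * (r ^ n' * ω r) := by
      refine integral_mono_aux hρ0 h1 (((intInt hω n' le_rfl zero_le_one hρ0 hρ1)).const_mul _) ?_
      intro r hr hr1
      have hω' := (hω.1 r ⟨hr.1, lt_of_le_of_ne (hr.2.trans hρ1) hr1⟩).le
      have : r ^ n ≤ ρ ^ (n - n') * r ^ n' := by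
        calc r ^ n = r ^ (n - n') * r ^ n' := by rw [← pow_add]; congr 1; omega
        _ ≤ ρ ^ (n - n') * r ^ n' := by
            exact mul_le_mul_of_nonneg_right (pow_le_pow_left₀ hr.1 hr.2 _) (pow_nonneg hr.1 _)
      nlinarith
    have step2 : (∫ r in (0:ℝ)..ρ, ρ ^ (n - n') * (r ^ n' * ω r)) = ρ ^ (n - n') * ∫ r in (0:ℝ)..ρ, r ^ n' * ω r := intervalIntegral.integral_const_mul _ _
    have step3 : (∫ r in (0:ℝ)..ρ, r ^ n' * ω r) ≤ wMom ω n' := by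
      have hs : (∫ r in (0:ℝ)..ρ, r ^ n' * ω r) + (∫ r in ρ..1, r ^ n' * ω r) = wMom ω n' :=
        integral_add_adjacent_intervals (intInt hω n' le_rfl zero_le_one hρ0 hρ1)
          (intInt hω n' hρ0 hρ1 zero_le_one le_rfl)
      have hnn : 0 ≤ ∫ r in ρ..1, r ^ n' * ω r := by
        refine integral_nonneg_aux hρ1 (intInt hω n' hρ0 hρ1 zero_le_one le_rfl) ?_
        intro r hr hr1
        have hr0 : (0:ℝ) ≤ r := hρ0.trans hr.1
        have hω' := (hω.1 r ⟨hr0, lt_of_le_of_ne hr.2 hr1⟩).le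
        positivity
      linarith
    calc (∫ r in (0:ℝ)..ρ, r ^ n * ω r) ≤ _ := step1
      _ = _ := step2
      _ ≤ ρ ^ (n - n') * wMom ω n' := by
          exact mul_le_mul_of_nonneg_left step3 (pow_nonneg hρ0 _)
  have hB : (∫ r in ρ..1, r ^ n * ω r) ≤ wHat ω ρ := by
    refine integral_mono_aux hρ1 h2 (intInt' hω hρ0 hρ1 zero_le_one le_rfl) ?_
    intro r hr hr1
    have hω' := (hω.1 r ⟨hρ0.trans hr.1, lt_of_le_of_ne hr.2 hr1⟩).le
    nlinarith [pow_le_one₀ (hρ0.trans hr.1) hr.2 (n := n)]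
  linarith

/-- `ρ^n ω̂(ρ) ≤ ω_n`. -/
lemma wMom_lower (hω : IsRadialWeight ω) (n : ℕ) {ρ : ℝ} (hρ0 : 0 ≤ ρ) (hρ1 : ρ ≤ 1) :
    ρ ^ n * wHat ω ρ ≤ wMom ω n := by
  have h1 : IntervalIntegrable (fun r => r ^ n * ω r) volume 0 ρ := intInt hω n le_rfl zero_le_one hρ0 hρ1
  have h2 : IntervalIntegrable (fun r => r ^ n * ω r) volume ρ 1 := intInt hω n hρ0 hρ1 zero_le_one le_rfl
  have hsplit : (∫ r in (0:ℝ)..ρ, r ^ n * ω r) + (∫ r in ρ..1, r ^ n * ω r) = wMom ω n :=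
    integral_add_adjacent_intervals h1 h2
  have hA : 0 ≤ ∫ r in (0:ℝ)..ρ, r ^ n * ω r := by
    refine integral_nonneg_aux hρ0 h1 ?_
    intro r hr hr1
    have hr0 : (0:ℝ) ≤ r := hr.1
    have hω' := (hω.1 r ⟨hr.1, lt_of_le_of_ne (hr.2.trans hρ1) hr1⟩).le
    positivity
  have hB : ρ ^ n * wHat ω ρ ≤ ∫ r in ρ..1, r ^ n * ω r := by
    have : ρ ^ n * wHat ω ρ = ∫ r in ρ..1, ρ ^ n * ω r := by
      unfold wHat; rw [intervalIntegral.integral_const_mul]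
    rw [this]
    refine integral_mono_aux hρ1 ((intInt' hω hρ0 hρ1 zero_le_one le_rfl).const_mul _) h2 ?_
    intro r hr hr1
    have hω' := (hω.1 r ⟨hρ0.trans hr.1, lt_of_le_of_ne hr.2 hr1⟩).le
    exact mul_le_mul_of_nonneg_right (pow_le_pow_left₀ hρ0 hr.1 n) hω'
  linarith

section Doubling
variable {C : ℝ} (hω : IsRadialWeight ω) (hC1 : 1 ≤ C)
  (hC : ∀ r ∈ Ico (0:ℝ) 1, wHat ω r ≤ C * wHat ω ((1 + r) / 2))

include hω hC1 hC

/-- iterated halving. -/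
lemma wHat_halving (L : ℕ) : ∀ d : ℝ, 0 < d → d ≤ 1 →
    wHat ω (1 - d) ≤ C ^ L * wHat ω (1 - d / 2 ^ L) := by
  induction L with
  | zero => intro d h1 h2; simp
  | succ L IH =>
    intro d h1 h2
    have step : wHat ω (1 - d) ≤ C * wHat ω (1 - d / 2) := by
      have := hC (1 - d) ⟨by linarith, by linarith⟩
      have heq : (1 + (1 - d)) / 2 = 1 - d / 2 := by ring
      rwa [heq] at this
    have IH' := IH (d / 2) (by linarith) (by linarith)
    have heq2 : 1 - d / 2 / 2 ^ L = 1 - d / 2 ^ (L + 1) := by ring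
    rw [heq2] at IH'
    calc wHat ω (1 - d) ≤ C * wHat ω (1 - d / 2) := step
      _ ≤ C * (C ^ L * wHat ω (1 - d / 2 ^ (L + 1))) := by
          exact mul_le_mul_of_nonneg_left IH' (by linarith)
      _ = C ^ (L + 1) * wHat ω (1 - d / 2 ^ (L + 1)) := by ring

/-- comparison: `ω̂(a) ≤ C^L ω̂(b)` when `(1-a)/2^L ≤ 1-b`. -/
lemma wHat_le_pow {a b : ℝ} (L : ℕ) (ha : 0 ≤ a) (ha' : a < 1) (hb : 0 ≤ b) (hb' : b ≤ 1)
    (hab : (1 - a) / 2 ^ L ≤ 1 - b) :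
    wHat ω a ≤ C ^ L * wHat ω b := by
  have h1 : wHat ω a ≤ C ^ L * wHat ω (1 - (1 - a) / 2 ^ L) := by
    have := wHat_halving hω hC1 hC L (1 - a) (by linarith) (by linarith)
    simpa using this
  have h2 : wHat ω (1 - (1 - a) / 2 ^ L) ≤ wHat ω b :=
    wHat_antitone hω hb (by linarith) (by nlinarith [div_nonneg (by linarith : (0:ℝ) ≤ 1 - a) (by positivity : (0:ℝ) ≤ (2:ℝ) ^ L)])
  calc wHat ω a ≤ _ := h1
    _ ≤ C ^ L * wHat ω b := by
        refine mul_le_mul_of_nonneg_left h2 (by positivity)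

/-- Claim K : `ω_n ≤ K ω̂(1-1/n)`. -/
lemma momK : ∃ K : ℝ, 1 ≤ K ∧ ∀ n : ℕ, 1 ≤ n →
    wMom ω n ≤ K * wHat ω (1 - 1 / n) := by
  obtain ⟨s, hs⟩ : ∃ s : ℕ, 4 * C ^ 2 ≤ s ∧ 4 ≤ s := ⟨max ⌈4 * C ^ 2⌉₊ 4,
    le_trans (Nat.le_ceil _) (by exact_mod_cast Nat.cast_le.2 (le_max_left _ _)), le_max_right _ _⟩
  obtain ⟨n₀, hn₀⟩ : ∃ n₀ : ℕ, n₀ = max s 4 := ⟨_, rfl⟩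
  obtain ⟨K, hK⟩ : ∃ K : ℝ, K = 2 * C ^ s + C ^ n₀ := ⟨_, rfl⟩
  have hCpos : (0:ℝ) < C := by linarith
  have hexp : Real.exp (-(s:ℝ) / 2) * C ^ 2 ≤ 1 / 2 := by
    have h1 : 2 * C ^ 2 ≤ Real.exp ((s:ℝ) / 2) := by
      have := Real.add_one_le_exp ((s:ℝ) / 2)
      nlinarith [hs.1]
    have h2 : Real.exp (-(s:ℝ) / 2) = (Real.exp ((s:ℝ) / 2))⁻¹ := by
      rw [← Real.exp_neg]; ring_nf
    have h3 : (0:ℝ) < Real.exp ((s:ℝ) / 2) := Real.exp_pos _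
    rw [h2]
    rw [inv_mul_le_iff₀ h3]
    nlinarith
  have hK1 : 1 ≤ K := by
    have h1 : (1:ℝ) ≤ C ^ s := one_le_pow₀ hC1
    have h2 : (1:ℝ) ≤ C ^ n₀ := one_le_pow₀ hC1
    rw [hK]; nlinarith
  refine ⟨K, hK1, ?_⟩
  intro n
  induction n using Nat.strong_induction_on with
  | _ n IH =>
  intro hn1
  have hn0R : (0:ℝ) < n := by exact_mod_cast Nat.pos_of_ne_zero (by omega)
  have hb0 : (0:ℝ) ≤ 1 - 1 / n := by
    have : (1:ℝ) / n ≤ 1 := by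
      rw [div_le_one hn0R]; exact_mod_cast hn1
    linarith
  have hb1 : (1:ℝ) - 1 / n ≤ 1 := by
    have : (0:ℝ) ≤ 1 / n := by positivity
    linarith
  have hWhnn : 0 ≤ wHat ω (1 - 1 / n) := wHat_nonneg hω hb0 hb1
  by_cases hsmall : n < n₀
  · have h0 : wMom ω n ≤ wHat ω 0 := wMom_le_wHat_zero hω n
    have h1 : wHat ω 0 ≤ C ^ n₀ * wHat ω (1 - 1 / n) := by
      refine wHat_le_pow hω hC1 hC n₀ le_rfl one_pos hb0 hb1 ?_
      have hn2 : (n:ℝ) ≤ 2 ^ n₀ := by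
        exact_mod_cast (Nat.le_of_lt (lt_of_lt_of_le hsmall (Nat.le_of_lt (Nat.lt_two_pow_self (n := n₀)))))
      have e : (1:ℝ) - (1 - 1/n) = 1/n := by ring
      have e2 : ((1:ℝ) - 0) / 2 ^ n₀ = 1 / 2 ^ n₀ := by ring
      rw [e, e2, div_le_div_iff₀ (by positivity) hn0R]
      nlinarith [hn2]
    have h2 : C ^ n₀ ≤ K := by
      have : (0:ℝ) ≤ C ^ s := by positivity
      rw [hK]; nlinarith
    nlinarith
  · push_neg at hsmall
    have hns : s ≤ n := le_trans (hn₀ ▸ le_max_left s 4) hsmall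
    have hn4 : 4 ≤ n := le_trans (hn₀ ▸ le_max_right s 4) hsmall
    obtain ⟨m, hm⟩ : ∃ m : ℕ, m = n / 2 := ⟨_, rfl⟩
    have hm1 : 1 ≤ m := by omega
    have hmn : m < n := by omega
    have hm0R : (0:ℝ) < m := by exact_mod_cast Nat.pos_of_ne_zero (by omega)
    have hsR : (0:ℝ) < s := by exact_mod_cast (by omega : 0 < s)
    obtain ⟨ρ, hρ⟩ : ∃ ρ : ℝ, ρ = 1 - (s:ℝ) / n := ⟨_, rfl⟩
    have hρ0 : 0 ≤ ρ := by
      have : (s:ℝ) / n ≤ 1 := by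
        rw [div_le_one hn0R]; exact_mod_cast hns
      rw [hρ]; linarith
    have hρ1 : ρ ≤ 1 := by
      have : (0:ℝ) ≤ (s:ℝ) / n := by positivity
      rw [hρ]; linarith
    have split := wMom_split hω (le_of_lt hmn) hρ0 hρ1 (n' := m)
    have hpow : ρ ^ (n - m) ≤ Real.exp (-(s:ℝ) / 2) := by
      have hρe : ρ ≤ Real.exp (-((s:ℝ) / n)) := by
        have := Real.add_one_le_exp (-((s:ℝ) / n))
        rw [hρ]; linarith
      calc ρ ^ (n - m) ≤ Real.exp (-((s:ℝ) / n)) ^ (n - m) := pow_le_pow_left₀ hρ0 hρe _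
        _ = Real.exp (-((s:ℝ) / n) * (n - m : ℕ)) := by rw [← Real.exp_nat_mul]; ring_nf
        _ ≤ Real.exp (-(s:ℝ) / 2) := by
            refine Real.exp_le_exp.2 ?_
            have hnm : (n:ℝ) ≤ 2 * ((n - m : ℕ) : ℝ) := by
              have : n ≤ 2 * (n - m) := by omega
              exact_mod_cast this
            rw [neg_div, neg_mul, neg_le_neg_iff, div_mul_eq_mul_div, le_div_iff₀ hn0R]
            nlinarith
    have IH' : wMom ω m ≤ K * wHat ω (1 - 1 / m) := IH m hmn hm1
    have h3 : wHat ω (1 - 1 / (m:ℝ)) ≤ C ^ 2 * wHat ω (1 - 1 / n) := by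
      refine wHat_le_pow hω hC1 hC 2 (by
        have : (1:ℝ) / m ≤ 1 := by rw [div_le_one hm0R]; exact_mod_cast hm1
        linarith) (by
        have : (0:ℝ) < 1 / m := by positivity
        linarith) hb0 hb1 ?_
      have h4m : (n:ℝ) ≤ 4 * m := by
        have : n ≤ 4 * m := by omega
        exact_mod_cast this
      have : (1 : ℝ) - (1 - 1 / m) = 1 / m := by ring
      rw [this]
      have : (1:ℝ) - (1 - 1/n) = 1/n := by ring
      rw [this]
      have e3 : ((1:ℝ)/m)/2^2 = 1/(4*m) := by
        rw [div_div]; norm_num; ring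
      rw [e3]
      exact one_div_le_one_div_of_le hn0R h4m
    have h4 : wHat ω ρ ≤ C ^ s * wHat ω (1 - 1 / n) := by
      have hρlt1 : ρ < 1 := by
        have : (0:ℝ) < (s:ℝ) / n := by positivity
        rw [hρ]; linarith
      refine wHat_le_pow hω hC1 hC s hρ0 hρlt1 hb0 hb1 ?_
      have : (1:ℝ) - ρ = s / n := by rw [hρ]; ring
      rw [this]
      have : (1:ℝ) - (1 - 1/n) = 1/n := by ring
      rw [this]
      rw [div_div, div_le_div_iff₀ (mul_pos hn0R (by positivity : (0:ℝ) < 2^s)) hn0R]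
      have h2s : (s:ℝ) ≤ 2 ^ s := by exact_mod_cast (Nat.lt_two_pow_self (n := s)).le
      have hmm := mul_le_mul_of_nonneg_right h2s hn0R.le
      linarith
    have hWm : 0 < wMom ω m := wMom_pos hω m
    have hK0 : (0:ℝ) ≤ K := by linarith
    have hC2nn : (0:ℝ) ≤ C ^ 2 := by positivity
    have hexp0 : (0:ℝ) < Real.exp (-(s:ℝ)/2) := Real.exp_pos _
    have hstep : ρ ^ (n - m) * wMom ω m ≤ Real.exp (-(s:ℝ)/2) * (K * (C ^ 2 * wHat ω (1 - 1/n))) := by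
      have hWmK : wMom ω m ≤ K * (C ^ 2 * wHat ω (1 - 1/n)) := by
        calc wMom ω m ≤ K * wHat ω (1 - 1/m) := IH'
          _ ≤ K * (C ^ 2 * wHat ω (1 - 1/n)) := mul_le_mul_of_nonneg_left h3 hK0
      refine mul_le_mul hpow hWmK hWm.le hexp0.le
    have hfin : Real.exp (-(s:ℝ)/2) * (K * (C ^ 2 * wHat ω (1 - 1/n))) + C ^ s * wHat ω (1 - 1/n)
        ≤ K * wHat ω (1 - 1/n) := by
      have e1 : Real.exp (-(s:ℝ)/2) * (K * (C ^ 2 * wHat ω (1 - 1/n)))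
          = (Real.exp (-(s:ℝ)/2) * C ^ 2) * (K * wHat ω (1 - 1/n)) := by ring
      have e2 : (Real.exp (-(s:ℝ)/2) * C ^ 2) * (K * wHat ω (1 - 1/n)) ≤ (1/2) * (K * wHat ω (1 - 1/n)) :=
        mul_le_mul_of_nonneg_right hexp (mul_nonneg hK0 hWhnn)
      have e3 : (0:ℝ) ≤ C ^ n₀ * wHat ω (1 - 1/n) := mul_nonneg (by positivity) hWhnn
      have e5 : (1/2) * (K * wHat ω (1 - 1/n))
          = C ^ s * wHat ω (1 - 1/n) + (1/2) * (C ^ n₀ * wHat ω (1 - 1/n)) := by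
        rw [hK]; ring
      rw [e1]; linarith
    linarith

/-- moment doubling : `ω_n ≤ D ω_{2n}`. -/
lemma momD : ∃ D : ℝ, 1 ≤ D ∧ ∀ n : ℕ, 1 ≤ n → wMom ω n ≤ D * wMom ω (2 * n) := by
  obtain ⟨K, hK1, hK⟩ := momK hω hC1 hC
  refine ⟨K * C * Real.exp 2, ?_, ?_⟩
  · have he2 := Real.one_le_exp (by norm_num : (0:ℝ) ≤ 2)
    have hKC : (1:ℝ) * 1 ≤ K * C := mul_le_mul hK1 hC1 zero_le_one (by linarith)
    nlinarith
  intro n hn1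
  have hn0R : (0:ℝ) < n := by exact_mod_cast Nat.pos_of_ne_zero (by omega)
  have h2n0R : (0:ℝ) < 2 * (n:ℝ) := by linarith
  have hb0 : (0:ℝ) ≤ 1 - 1 / n := by
    have : (1:ℝ) / n ≤ 1 := by rw [div_le_one hn0R]; exact_mod_cast hn1
    linarith
  have h1 := hK n hn1
  have h2 : wHat ω (1 - 1 / n) ≤ C * wHat ω (1 - 1 / (2 * n : ℕ)) := by
    have hc : ((2 * n : ℕ) : ℝ) = 2 * (n:ℝ) := by push_cast; ring
    rw [hc]
    have h1n : (0:ℝ) < 1 / n := by positivity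
    have hpos2 : (0:ℝ) < 1 / (2 * (n:ℝ)) := by positivity
    have hle : (1:ℝ) / (2 * n) ≤ 1 := by
      rw [div_le_one h2n0R]
      have : (1:ℝ) ≤ (n:ℝ) := by exact_mod_cast hn1
      linarith
    have h := wHat_le_pow hω hC1 hC (a := 1 - 1/(n:ℝ)) (b := 1 - 1/(2*(n:ℝ))) 1 hb0
      (by linarith) (by linarith) (by linarith) (by
        have e : (1:ℝ) - (1 - 1/n) = 1/n := by ring
        have e2 : (1:ℝ) - (1 - 1/(2*n)) = 1/(2*n) := by ring
        rw [e, e2, pow_one, div_div, mul_comm])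
    simpa [pow_one] using h
  have h3 : wHat ω (1 - 1 / (2 * n : ℕ)) ≤ Real.exp 2 * wMom ω (2 * n) := by
    set x : ℝ := 1 / (2 * (n:ℝ)) with hx
    have hc : ((2 * n : ℕ) : ℝ) = 2 * (n:ℝ) := by push_cast; ring
    have hx0 : 0 < x := by rw [hx]; positivity
    have hxhalf : x ≤ 1/2 := by
      rw [hx, div_le_div_iff₀ h2n0R (by norm_num)]
      have : (1:ℝ) ≤ (n:ℝ) := by exact_mod_cast hn1
      linarith
    have hexp2 : Real.exp (-(2*x)) ≤ 1 - x := by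
      have ha := Real.add_one_le_exp (2*x)
      have hb : Real.exp (-(2*x)) = (Real.exp (2*x))⁻¹ := Real.exp_neg _
      have hc2 : (0:ℝ) < Real.exp (2*x) := Real.exp_pos _
      rw [hb, inv_le_iff_one_le_mul₀ hc2]  -- may not exist; fix
      nlinarith
    have hρ0 : (0:ℝ) ≤ 1 - x := by linarith
    have hρ1 : (1:ℝ) - x ≤ 1 := by linarith
    have hlow := wMom_lower hω (2*n) hρ0 hρ1
    have hpow : Real.exp (-2 : ℝ) ≤ (1 - x) ^ (2 * n) := by
      have hnne : (n:ℝ) ≠ 0 := ne_of_gt hn0R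
      have e : Real.exp (-(2*x)) ^ (2*n) = Real.exp (-2:ℝ) := by
        rw [← Real.exp_nat_mul]
        congr 1
        push_cast
        rw [hx]
        field_simp
      calc Real.exp (-2:ℝ) = Real.exp (-(2*x)) ^ (2*n) := e.symm
        _ ≤ (1 - x) ^ (2*n) := pow_le_pow_left₀ (Real.exp_pos _).le hexp2 _
    have hWh : 0 ≤ wHat ω (1 - x) := wHat_nonneg hω hρ0 hρ1
    have : Real.exp (-2:ℝ) * wHat ω (1 - x) ≤ wMom ω (2*n) := by
      calc Real.exp (-2:ℝ) * wHat ω (1 - x) ≤ (1-x)^(2*n) * wHat ω (1-x) :=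
            mul_le_mul_of_nonneg_right hpow hWh
        _ ≤ wMom ω (2*n) := hlow
    have he : Real.exp (2:ℝ) * Real.exp (-2:ℝ) = 1 := by
      rw [← Real.exp_add]; norm_num
    have hMnn := (wMom_pos hω (2*n)).le
    rw [hc, ← hx]
    nlinarith [Real.exp_pos (2:ℝ)]
  have hWhnn2 : 0 ≤ wHat ω (1 - 1 / (2*n:ℕ)) := by
    have hc : ((2 * n : ℕ) : ℝ) = 2 * (n:ℝ) := by push_cast; ring
    rw [hc]
    refine wHat_nonneg hω (by
      have : (1:ℝ) / (2*n) ≤ 1 := by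
        rw [div_le_one h2n0R]
        have : (1:ℝ) ≤ (n:ℝ) := by exact_mod_cast hn1
        linarith
      linarith) (by
      have : (0:ℝ) ≤ 1 / (2*n) := by positivity
      linarith)
  have hCpos : (0:ℝ) < C := by linarith
  have hK0 : (0:ℝ) ≤ K := by linarith
  calc wMom ω n ≤ K * wHat ω (1 - 1/n) := h1
    _ ≤ K * (C * wHat ω (1 - 1/(2*n:ℕ))) := mul_le_mul_of_nonneg_left h2 hK0
    _ ≤ K * (C * (Real.exp 2 * wMom ω (2*n))) := by
        refine mul_le_mul_of_nonneg_left (mul_le_mul_of_nonneg_left h3 hCpos.le) hK0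
    _ = K * C * Real.exp 2 * wMom ω (2*n) := by ring

end Doubling

section Seq
variable {c : ℕ → ℝ} {E : ℝ}
  (hcpos : ∀ k, 0 < c k) (hcmono : Monotone c) (hE1 : 1 ≤ E)
  (hdouble : ∀ j, c (2 * j) ≤ E * c j ∧ c (2 * j + 1) ≤ E * c j)

include hcpos hcmono hE1 hdouble

lemma c_pow_bound : ∀ i : ℕ, ∀ k, k < 2 ^ i → c k ≤ E ^ i * c 0 := by
  intro i
  induction i with
  | zero => intro k hk; interval_cases k; simp
  | succ i IH =>
    intro k hk
    have h2 : k / 2 < 2 ^ i := by omega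
    have hk2 := IH (k / 2) h2
    have hck : c k ≤ E * c (k / 2) := by
      rcases Nat.even_or_odd k with ⟨j, hj⟩ | ⟨j, hj⟩
      · have : k = 2 * j := by omega
        subst this
        have := (hdouble j).1
        simpa [Nat.mul_div_cancel_left] using this
      · have : k = 2 * j + 1 := by omega
        subst this
        have := (hdouble j).2
        have hdiv : (2 * j + 1) / 2 = j := by omega
        rw [hdiv]
        exact this
    calc c k ≤ E * c (k / 2) := hck
      _ ≤ E * (E ^ i * c 0) := mul_le_mul_of_nonneg_left hk2 (by linarith)
      _ = E ^ (i + 1) * c 0 := by ring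

lemma c_poly_bound : ∃ q : ℕ, ∀ k, c k ≤ (E * c 0) * ((k:ℝ) + 1) ^ q := by
  obtain ⟨q, hq⟩ := pow_unbounded_of_one_lt E (by norm_num : (1:ℝ) < 2)
  refine ⟨q, ?_⟩
  intro k
  rcases Nat.eq_zero_or_pos k with hk0 | hk1
  · subst hk0
    have h1 : ((0:ℝ) + 1) ^ q = 1 := by norm_num
    push_cast
    rw [h1]
    nlinarith [hcpos 0]
  · have hki : k < 2 ^ (Nat.log 2 k + 1) := Nat.lt_pow_succ_log_self (by norm_num) k
    have h1 : c k ≤ E ^ (Nat.log 2 k + 1) * c 0 := c_pow_bound hcpos hcmono hE1 hdouble _ k hki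
    have h2 : E ^ (Nat.log 2 k + 1) = E * E ^ (Nat.log 2 k) := by ring
    have h3 : E ^ (Nat.log 2 k) ≤ ((2:ℝ) ^ q) ^ (Nat.log 2 k) :=
      pow_le_pow_left₀ (by linarith) hq.le _
    have h4 : ((2:ℝ) ^ q) ^ (Nat.log 2 k) = ((2:ℝ) ^ (Nat.log 2 k)) ^ q := by
      rw [← pow_mul, ← pow_mul, Nat.mul_comm]
    have h5 : ((2:ℝ) ^ (Nat.log 2 k)) ≤ (k:ℝ) := by
      exact_mod_cast Nat.pow_log_le_self 2 (by omega)
    have h6 : ((2:ℝ) ^ (Nat.log 2 k)) ^ q ≤ ((k:ℝ) + 1) ^ q := by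
      refine pow_le_pow_left₀ (by positivity) (by linarith) _
    have hc0 : 0 < c 0 := hcpos 0
    calc c k ≤ E ^ (Nat.log 2 k + 1) * c 0 := h1
      _ = (E ^ (Nat.log 2 k)) * (E * c 0) := by rw [h2]; ring
      _ ≤ (((k:ℝ) + 1) ^ q) * (E * c 0) := by
          refine mul_le_mul_of_nonneg_right ?_ (by nlinarith)
          calc E ^ (Nat.log 2 k) ≤ ((2:ℝ) ^ q) ^ (Nat.log 2 k) := h3
            _ = ((2:ℝ) ^ (Nat.log 2 k)) ^ q := h4
            _ ≤ ((k:ℝ) + 1) ^ q := h6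
      _ = (E * c 0) * ((k:ℝ) + 1) ^ q := by ring

lemma c_summable {u : ℝ} (hu0 : 0 ≤ u) (hu1 : u < 1) :
    Summable (fun k : ℕ => u ^ k * c k) := by
  obtain ⟨q, hq⟩ := c_poly_bound hcpos hcmono hE1 hdouble
  have hA : 0 ≤ E * c 0 := by nlinarith [hcpos 0]
  have hs1 : Summable (fun k : ℕ => (E * c 0) * (2 ^ q * ((k:ℝ) ^ q * u ^ k))) := by
    exact ((summable_pow_mul_geometric_of_norm_lt_one (R := ℝ) q (by
      rwa [Real.norm_eq_abs, _root_.abs_of_nonneg hu0])).mul_left _).mul_left _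
  have hs2 : Summable (fun k : ℕ => (E * c 0) * (2 ^ q * u ^ k)) := by
    exact ((summable_geometric_of_lt_one hu0 hu1).mul_left _).mul_left _
  refine Summable.of_nonneg_of_le (fun k => ?_) (fun k => ?_) (hs1.add hs2)
  · have := (hcpos k).le
    positivity
  · have hb : ((k:ℝ) + 1) ^ q ≤ 2 ^ q * (k:ℝ) ^ q + 2 ^ q := by
      rcases Nat.eq_zero_or_pos k with hk0 | hk1
      · subst hk0
        push_cast
        have e1 : ((0:ℝ) + 1) ^ q = 1 := by norm_num
        have e2 : ((0:ℝ)) ^ q ≥ 0 := by positivity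
        have e3 : (1:ℝ) ≤ 2 ^ q := one_le_pow₀ (by norm_num)
        nlinarith
      · have h1 : ((k:ℝ) + 1) ≤ 2 * (k:ℝ) := by
          have : (1:ℝ) ≤ (k:ℝ) := by exact_mod_cast hk1
          linarith
        have h2 : ((k:ℝ) + 1) ^ q ≤ (2 * (k:ℝ)) ^ q := pow_le_pow_left₀ (by positivity) h1 _
        have h3 : ((2:ℝ) * k) ^ q = 2 ^ q * (k:ℝ) ^ q := mul_pow 2 _ q
        nlinarith [pow_nonneg (by norm_num : (0:ℝ) ≤ 2) q]
    have huk : (0:ℝ) ≤ u ^ k := by positivity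
    have := hq k
    calc u ^ k * c k ≤ u ^ k * ((E * c 0) * ((k:ℝ) + 1) ^ q) :=
          mul_le_mul_of_nonneg_left (hq k) huk
      _ ≤ u ^ k * ((E * c 0) * (2 ^ q * (k:ℝ) ^ q + 2 ^ q)) := by
          refine mul_le_mul_of_nonneg_left (mul_le_mul_of_nonneg_left hb hA) huk
      _ = (E * c 0) * (2 ^ q * ((k:ℝ) ^ q * u ^ k)) + (E * c 0) * (2 ^ q * u ^ k) := by ring

lemma geom_aux {u : ℝ} (hu0 : 0 ≤ u) (hu1 : u < 1) (k : ℕ) :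
    (k:ℝ) * u ^ k ≤ 1 / (1 - u) := by
  have h1 : (k:ℝ) * u ^ k ≤ ∑ i ∈ Finset.range k, u ^ i := by
    have h2 : ∀ i ∈ Finset.range k, u ^ k ≤ u ^ i := by
      intro i hi
      exact pow_le_pow_of_le_one hu0 hu1.le (Finset.mem_range.1 hi).le
    have h3 := Finset.card_nsmul_le_sum (Finset.range k) (fun i => u ^ i) (u ^ k) h2
    simpa [nsmul_eq_mul] using h3
  have h4 : ∑ i ∈ Finset.range k, u ^ i ≤ 1 / (1 - u) := by
    rw [geom_sum_eq (ne_of_lt hu1)]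
    have e : (u ^ k - 1) / (u - 1) = (1 - u ^ k) / (1 - u) := by
      rw [← neg_div_neg_eq]; ring_nf
    rw [e, div_le_div_iff₀ (by linarith) (by linarith)]
    nlinarith [pow_nonneg hu0 k]
  linarith

lemma U_halve {u : ℝ} (hu0 : 0 ≤ u) (hu1 : u < 1) :
    (∑' k : ℕ, u ^ k * c k) ≤ 2 * E * ∑' k : ℕ, (u ^ 2) ^ k * c k := by
  have hu20 : (0:ℝ) ≤ u ^ 2 := by positivity
  have hu21 : u ^ 2 < 1 := by nlinarith
  have hsum : Summable (fun k : ℕ => u ^ k * c k) := c_summable hcpos hcmono hE1 hdouble hu0 hu1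
  have hsum2 : Summable (fun k : ℕ => (u ^ 2) ^ k * c k) :=
    c_summable hcpos hcmono hE1 hdouble hu20 hu21
  have hsumE : Summable (fun k : ℕ => E * ((u ^ 2) ^ k * c k)) := hsum2.mul_left E
  have heven : Summable (fun k : ℕ => u ^ (2 * k) * c (2 * k)) := by
    have hinj : Function.Injective (fun k : ℕ => 2 * k) := fun a b h => by dsimp at h; omega
    exact hsum.comp_injective hinj
  have hodd : Summable (fun k : ℕ => u ^ (2 * k + 1) * c (2 * k + 1)) := by
    have hinj : Function.Injective (fun k : ℕ => 2 * k + 1) := fun a b h => by dsimp at h; omega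
    exact hsum.comp_injective hinj
  rw [← tsum_even_add_odd heven hodd]
  have h1 : (∑' k : ℕ, u ^ (2 * k) * c (2 * k)) ≤ ∑' k : ℕ, E * ((u ^ 2) ^ k * c k) := by
    refine Summable.tsum_le_tsum (fun k => ?_) heven hsumE
    have e1 : u ^ (2 * k) = (u ^ 2) ^ k := by rw [← pow_mul]
    rw [e1]
    have := (hdouble k).1
    have hp : (0:ℝ) ≤ (u ^ 2) ^ k := by positivity
    nlinarith [hcpos (2 * k), hcpos k]
  have h2 : (∑' k : ℕ, u ^ (2 * k + 1) * c (2 * k + 1)) ≤ ∑' k : ℕ, E * ((u ^ 2) ^ k * c k) := by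
    refine Summable.tsum_le_tsum (fun k => ?_) hodd hsumE
    have e1 : u ^ (2 * k) = (u ^ 2) ^ k := by rw [← pow_mul]
    have e2 : u ^ (2 * k + 1) ≤ u ^ (2 * k) := pow_le_pow_of_le_one hu0 hu1.le (by omega)
    have := (hdouble k).2
    have hp : (0:ℝ) ≤ (u ^ 2) ^ k := by positivity
    have hcp := (hcpos (2 * k + 1)).le
    calc u ^ (2 * k + 1) * c (2 * k + 1) ≤ u ^ (2 * k) * c (2 * k + 1) :=
          mul_le_mul_of_nonneg_right e2 hcp
      _ = (u ^ 2) ^ k * c (2 * k + 1) := by rw [e1]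
      _ ≤ (u ^ 2) ^ k * (E * c k) := mul_le_mul_of_nonneg_left this hp
      _ = E * ((u ^ 2) ^ k * c k) := by ring
  have h3 : (∑' k : ℕ, E * ((u ^ 2) ^ k * c k)) = E * ∑' k : ℕ, (u ^ 2) ^ k * c k := tsum_mul_left
  rw [h3] at h1 h2
  linarith

lemma U_deriv {u : ℝ} (hu0 : 0 ≤ u) (hu1 : u < 1) :
    (∑' k : ℕ, (k:ℝ) * (u ^ 2) ^ k * c k) ≤ (1 / (1 - u)) * ∑' k : ℕ, u ^ k * c k := by
  have hsum : Summable (fun k : ℕ => u ^ k * c k) := c_summable hcpos hcmono hE1 hdouble hu0 hu1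
  have hsumR : Summable (fun k : ℕ => (1 / (1 - u)) * (u ^ k * c k)) := hsum.mul_left _
  have hterm : ∀ k : ℕ, (k:ℝ) * (u ^ 2) ^ k * c k ≤ (1 / (1 - u)) * (u ^ k * c k) := by
    intro k
    have e1 : (u ^ 2) ^ k = u ^ k * u ^ k := by rw [← pow_add, ← pow_mul]; ring_nf
    have h2 := geom_aux hcpos hcmono hE1 hdouble hu0 hu1 k
    have hnn : (0:ℝ) ≤ u ^ k * c k := mul_nonneg (by positivity) (hcpos k).le
    calc (k:ℝ) * (u ^ 2) ^ k * c k = ((k:ℝ) * u ^ k) * (u ^ k * c k) := by rw [e1]; ring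
      _ ≤ (1 / (1 - u)) * (u ^ k * c k) := mul_le_mul_of_nonneg_right h2 hnn
  have hsumL : Summable (fun k : ℕ => (k:ℝ) * (u ^ 2) ^ k * c k) := by
    refine Summable.of_nonneg_of_le (fun k => ?_) hterm hsumR
    have := (hcpos k).le
    positivity
  calc (∑' k : ℕ, (k:ℝ) * (u ^ 2) ^ k * c k) ≤ ∑' k : ℕ, (1 / (1 - u)) * (u ^ k * c k) :=
        Summable.tsum_le_tsum hterm hsumL hsumR
    _ = (1 / (1 - u)) * ∑' k : ℕ, u ^ k * c k := tsum_mul_left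

lemma U_mono_sum {u : ℝ} (hu0 : 0 ≤ u) (hu1 : u < 1) : 0 ≤ ∑' k : ℕ, u ^ k * c k :=
  tsum_nonneg (fun k => mul_nonneg (by positivity) (hcpos k).le)

lemma U_deriv_summable {u : ℝ} (hu0 : 0 ≤ u) (hu1 : u < 1) :
    Summable (fun k : ℕ => (k:ℝ) * (u ^ 2) ^ k * c k) := by
  have hsum : Summable (fun k : ℕ => u ^ k * c k) := c_summable hcpos hcmono hE1 hdouble hu0 hu1
  have hsumR : Summable (fun k : ℕ => (1 / (1 - u)) * (u ^ k * c k)) := hsum.mul_left _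
  have hterm : ∀ k : ℕ, (k:ℝ) * (u ^ 2) ^ k * c k ≤ (1 / (1 - u)) * (u ^ k * c k) := by
    intro k
    have e1 : (u ^ 2) ^ k = u ^ k * u ^ k := by rw [← pow_add, ← pow_mul]; ring_nf
    have h2 := geom_aux hcpos hcmono hE1 hdouble hu0 hu1 k
    have hnn : (0:ℝ) ≤ u ^ k * c k := mul_nonneg (by positivity) (hcpos k).le
    calc (k:ℝ) * (u ^ 2) ^ k * c k = ((k:ℝ) * u ^ k) * (u ^ k * c k) := by rw [e1]; ring
      _ ≤ (1 / (1 - u)) * (u ^ k * c k) := mul_le_mul_of_nonneg_right h2 hnn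
  refine Summable.of_nonneg_of_le (fun k => ?_) hterm hsumR
  have := (hcpos k).le
  positivity

end Seq


lemma mem_uD_iff {z : ℂ} : z ∈ uD ↔ ‖z‖ < 1 := by
  simp [uD, Metric.mem_ball, Complex.dist_eq]

lemma denom_ne_zero {z w : ℂ} (hz : ‖z‖ < 1) (hw : ‖w‖ < 1) :
    (1 : ℂ) - (starRingEnd ℂ) z * w ≠ 0 := by
  intro h
  have h0 : (starRingEnd ℂ) z * w = 1 := by linear_combination -h
  have h1 : ‖(starRingEnd ℂ) z * w‖ = 1 := by rw [h0]; simp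
  rw [norm_mul, Complex.norm_conj] at h1
  nlinarith [norm_nonneg z, norm_nonneg w]

lemma normSq_identity (z w : ℂ) :
    Complex.normSq (1 - (starRingEnd ℂ) z * w) - Complex.normSq (z - w)
      = (1 - Complex.normSq z) * (1 - Complex.normSq w) := by
  simp only [Complex.normSq_apply, Complex.sub_re, Complex.sub_im, Complex.mul_re,
    Complex.mul_im, Complex.one_re, Complex.one_im, Complex.conj_re, Complex.conj_im]
  ring

lemma pRho_lt_one {z w : ℂ} (hz : ‖z‖ < 1) (hw : ‖w‖ < 1) :
    pRho z w < 1 := by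
  have hd := denom_ne_zero hz hw
  have h1 : Complex.normSq (z - w) < Complex.normSq (1 - (starRingEnd ℂ) z * w) := by
    have h2 : 0 < (1 - Complex.normSq z) * (1 - Complex.normSq w) := by
      have e1 := Complex.normSq_eq_norm_sq z
      have e2 := Complex.normSq_eq_norm_sq w
      have hz2 : Complex.normSq z < 1 := by rw [e1]; nlinarith [norm_nonneg z]
      have hw2 : Complex.normSq w < 1 := by rw [e2]; nlinarith [norm_nonneg w]
      exact mul_pos (by linarith) (by linarith)
    nlinarith [normSq_identity z w]
  unfold pRho
  rw [norm_div, div_lt_one (by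
    have := Complex.normSq_pos.2 hd
    have := norm_pos_iff.2 hd
    exact this)]
  rw [Complex.norm_def, Complex.norm_def]
  exact Real.sqrt_lt_sqrt (Complex.normSq_nonneg _) h1

lemma pRho_small {z w : ℂ} (hz : ‖z‖ < 1) (hw : ‖w‖ < 1)
    {ρ₀ : ℝ} (hρ₀ : 0 < ρ₀) (hρ₁ : ρ₀ < 1)
    (hb : bDist z w < (1/2) * Real.log ((1 + ρ₀) / (1 - ρ₀))) :
    pRho z w < ρ₀ := by
  by_contra hcon
  push_neg at hcon
  have h1 : pRho z w < 1 := pRho_lt_one hz hw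
  have h2 : (1 + ρ₀) / (1 - ρ₀) ≤ (1 + pRho z w) / (1 - pRho z w) := by
    rw [div_le_div_iff₀ (by linarith) (by linarith)]
    nlinarith
  have h3 : Real.log ((1 + ρ₀) / (1 - ρ₀)) ≤ Real.log ((1 + pRho z w) / (1 - pRho z w)) := by
    refine Real.log_le_log (by apply div_pos <;> linarith) h2
  unfold bDist at hb
  linarith

/-- `|w - z| ≤ 4 ρ₀ (1 - |z|)` when `ρ(z,w) < ρ₀ ≤ 1/2`. -/
lemma dist_le_of_pRho {z w : ℂ} (hz : ‖z‖ < 1) (hw : ‖w‖ < 1)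
    {ρ₀ : ℝ} (hρ₀ : 0 < ρ₀) (hhalf : ρ₀ ≤ 1/2) (hρ : pRho z w < ρ₀) :
    ‖w - z‖ ≤ 4 * ρ₀ * (1 - ‖z‖) := by
  have hd := denom_ne_zero hz hw
  have habs : ‖z - w‖ = pRho z w * ‖1 - (starRingEnd ℂ) z * w‖ := by
    unfold pRho
    rw [norm_div, div_mul_cancel₀]
    exact norm_ne_zero_iff.2 hd
  have htri : ‖1 - (starRingEnd ℂ) z * w‖
      ≤ (1 - ‖z‖ ^ 2) + ‖z‖ * ‖z - w‖ := by
    have e1 : (1:ℂ) - (starRingEnd ℂ) z * w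
        = (1 - (starRingEnd ℂ) z * z) + (starRingEnd ℂ) z * (z - w) := by ring
    calc ‖1 - (starRingEnd ℂ) z * w‖
        ≤ ‖1 - (starRingEnd ℂ) z * z‖ + ‖(starRingEnd ℂ) z * (z - w)‖ := by
          rw [e1]; exact norm_add_le _ _
      _ = (1 - ‖z‖ ^ 2) + ‖z‖ * ‖z - w‖ := by
          congr 1
          · have e2 : (starRingEnd ℂ) z * z = (Complex.normSq z : ℂ) := by
              rw [mul_comm, Complex.mul_conj]
            rw [e2]
            have e3 : ((1:ℂ) - (Complex.normSq z : ℂ)) = ((1 - Complex.normSq z : ℝ) : ℂ) := by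
              push_cast; ring
            rw [e3, Complex.norm_real, Real.norm_eq_abs, _root_.abs_of_nonneg (by
              rw [Complex.normSq_eq_norm_sq]; nlinarith [norm_nonneg z]),
              Complex.normSq_eq_norm_sq]
          · rw [norm_mul, Complex.norm_conj]
  have hzw : ‖z - w‖ ≤ ρ₀ * ((1 - ‖z‖ ^ 2) + ‖z‖ * ‖z - w‖) := by
    calc ‖z - w‖ = pRho z w * ‖1 - (starRingEnd ℂ) z * w‖ := habs
      _ ≤ ρ₀ * ((1 - ‖z‖ ^ 2) + ‖z‖ * ‖z - w‖) := by
        refine mul_le_mul hρ.le htri (norm_nonneg _) hρ₀.le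
  have ht0 : 0 ≤ ‖z‖ := norm_nonneg z
  have habs0 : 0 ≤ ‖z - w‖ := norm_nonneg _
  have hstep : ρ₀ * (‖z‖ * ‖z - w‖) ≤ ρ₀ * ‖z - w‖ := by
    refine mul_le_mul_of_nonneg_left ?_ hρ₀.le
    nlinarith
  have key : ‖z - w‖ * (1 - ρ₀) ≤ ρ₀ * (1 - ‖z‖ ^ 2) := by
    nlinarith [hstep]
  have hfin : ‖z - w‖ ≤ 4 * ρ₀ * (1 - ‖z‖) := by
    have h2 : (1:ℝ) - ‖z‖ ^ 2 ≤ 2 * (1 - ‖z‖) := by nlinarith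
    nlinarith [key, mul_le_mul_of_nonneg_left h2 hρ₀.le, mul_le_mul_of_nonneg_right hhalf habs0]
  rw [← norm_neg (w - z)]  -- |w-z| = |z-w|
  simpa [neg_sub] using hfin


lemma invRel {x y E : ℝ} (hx : 0 < x) (hy : 0 < y) (h : x ≤ E * y) : y⁻¹ ≤ E * x⁻¹ := by
  have h1 : y⁻¹ * x ≤ y⁻¹ * (E * y) := mul_le_mul_of_nonneg_left h (by positivity)
  have h2 : y⁻¹ * (E * y) = E := by field_simp
  have h3 : (y⁻¹ * x) * x⁻¹ ≤ E * x⁻¹ := by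
    refine mul_le_mul_of_nonneg_right ?_ (by positivity)
    rw [← h2]; exact h1
  have h4 : (y⁻¹ * x) * x⁻¹ = y⁻¹ := by field_simp
  linarith [h4 ▸ h3]


end S16

open S16 in
/-- For `ω ∈ D` there are `r > 0` and `C ≥ 1` with
`C⁻¹ B_z^ω(z) ≤ |B_z^ω(w)| ≤ C B_z^ω(z)` for all `z ∈ 𝔻` and `w ∈ D(z,r)`. -/
theorem statement16 (ω : ℝ → ℝ) (hω : IsRadialWeight ω) (hD : IsDD ω) :
    ∃ r : ℝ, 0 < r ∧ ∃ C : ℝ, 1 ≤ C ∧ ∀ z ∈ uD, ∀ w ∈ bDisk z r,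
      C⁻¹ * wBkDiag ω z ≤ ‖wBk ω z w‖ ∧
      ‖wBk ω z w‖ ≤ C * wBkDiag ω z := by
  classical
  -- upgrade the doubling constant to `C ≥ 1`
  obtain ⟨C0, hC00, hC0⟩ := hD.1
  have hC : ∀ r ∈ Ico (0:ℝ) 1, wHat ω r ≤ (max C0 1) * wHat ω ((1 + r) / 2) := by
    intro r hr
    obtain ⟨hr1, hr2⟩ := hr
    refine le_trans (hC0 r ⟨hr1, hr2⟩) (mul_le_mul_of_nonneg_right (le_max_left _ _) ?_)
    exact wHat_nonneg hω (by linarith) (by linarith)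
  obtain ⟨D, hD1, hDmom⟩ := momD hω (le_max_right C0 1) hC
  have hDpos : (0:ℝ) < D := by linarith
  -- the coefficient sequence
  set c : ℕ → ℝ := fun k => (2 * wMom ω (2 * k + 1))⁻¹ with hc
  have hcpos : ∀ k, 0 < c k := by
    intro k; rw [hc]; exact inv_pos.2 (by linarith [wMom_pos hω (2*k+1)])
  have hcmono : Monotone c := by
    refine monotone_nat_of_le_succ (fun k => ?_)
    rw [hc]
    have ha : 0 < 2 * wMom ω (2 * (k+1) + 1) := by linarith [wMom_pos hω (2*(k+1)+1)]
    refine inv_anti₀ ha ?_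
    have := wMom_anti hω (by omega : 2 * k + 1 ≤ 2 * (k+1) + 1)
    linarith
  have hWD : ∀ n : ℕ, 1 ≤ n → wMom ω n ≤ D * wMom ω (2 * n) := hDmom
  -- doubling for c with constant E := D^2
  set E : ℝ := D ^ 2 with hE
  have hE1 : 1 ≤ E := by rw [hE]; nlinarith
  have hdouble : ∀ j, c (2 * j) ≤ E * c j ∧ c (2 * j + 1) ≤ E * c j := by
    intro j
    have hWp : ∀ n, 0 < wMom ω n := wMom_pos hω
    constructor
    · have key : wMom ω (2 * j + 1) ≤ E * wMom ω (2 * (2 * j) + 1) := by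
        have h1 : wMom ω (2 * j + 1) ≤ D * wMom ω (2 * (2 * j + 1)) := hWD _ (by omega)
        have h2 : wMom ω (2 * (2 * j + 1)) ≤ wMom ω (4 * j + 1) := wMom_anti hω (by omega)
        have h3 : (4:ℕ) * j + 1 = 2 * (2 * j) + 1 := by omega
        rw [h3] at h2
        calc wMom ω (2*j+1) ≤ D * wMom ω (2*(2*j+1)) := h1
          _ ≤ D * wMom ω (2*(2*j)+1) := mul_le_mul_of_nonneg_left h2 hDpos.le
          _ ≤ D^2 * wMom ω (2*(2*j)+1) :=
              mul_le_mul_of_nonneg_right (by nlinarith : D ≤ D^2) (hWp _).le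
          _ = E * wMom ω (2*(2*j)+1) := by rw [hE]
      have := invRel (E := E) (by linarith [hWp (2*j+1)] : (0:ℝ) < 2 * wMom ω (2*j+1))
        (by linarith [hWp (2*(2*j)+1)] : (0:ℝ) < 2 * wMom ω (2*(2*j)+1)) (by linarith)
      rw [hc]
      exact this
    · have key : wMom ω (2 * j + 1) ≤ E * wMom ω (2 * (2 * j + 1) + 1) := by
        have h1 : wMom ω (2 * j + 1) ≤ D * wMom ω (2 * (2 * j + 1)) := hWD _ (by omega)
        have h2 : wMom ω (2 * (2 * j + 1)) ≤ D * wMom ω (2 * (2 * (2 * j + 1))) := hWD _ (by omega)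
        have h3 : wMom ω (2 * (2 * (2 * j + 1))) ≤ wMom ω (2 * (2 * j + 1) + 1) :=
          wMom_anti hω (by omega)
        calc wMom ω (2*j+1) ≤ D * wMom ω (2*(2*j+1)) := h1
          _ ≤ D * (D * wMom ω (2*(2*(2*j+1)))) := mul_le_mul_of_nonneg_left h2 hDpos.le
          _ = D^2 * wMom ω (2*(2*(2*j+1))) := by ring
          _ ≤ D^2 * wMom ω (2*(2*j+1)+1) := mul_le_mul_of_nonneg_left h3 (by positivity)
          _ = E * wMom ω (2*(2*j+1)+1) := by rw [hE]
      have := invRel (E := E) (by linarith [hWp (2*j+1)] : (0:ℝ) < 2 * wMom ω (2*j+1))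
        (by linarith [hWp (2*(2*j+1)+1)] : (0:ℝ) < 2 * wMom ω (2*(2*j+1)+1)) (by linarith)
      rw [hc]
      exact this
  -- choose constants
  obtain ⟨ρ₀, hρ₀def⟩ : ∃ ρ₀ : ℝ, ρ₀ = (64 * D ^ 4)⁻¹ := ⟨_, rfl⟩
  have hρ₀pos : 0 < ρ₀ := by rw [hρ₀def]; positivity
  have hρ₀half : ρ₀ ≤ 1 / 2 := by
    have h2 : (2:ℝ) ≤ 64 * D ^ 4 := by nlinarith
    rw [hρ₀def]
    calc (64 * D ^ 4)⁻¹ ≤ 2⁻¹ := inv_anti₀ (by norm_num) h2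
      _ = 1 / 2 := by norm_num
  have hρ₀lt1 : ρ₀ < 1 := lt_of_le_of_lt hρ₀half (by norm_num)
  refine ⟨(1/2) * Real.log ((1 + ρ₀) / (1 - ρ₀)), ?_, 2, by norm_num, ?_⟩
  · have h1 : 1 < (1 + ρ₀) / (1 - ρ₀) := by
      rw [lt_div_iff₀ (by linarith)]
      linarith
    have := Real.log_pos h1
    linarith
  intro z hz w hw
  obtain ⟨hwD, hwb⟩ := hw
  have hzlt : ‖z‖ < 1 := by
    simpa [uD, Metric.mem_ball, Complex.dist_eq] using hz
  have hwlt : ‖w‖ < 1 := by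
    simpa [uD, Metric.mem_ball, Complex.dist_eq] using hwD
  have hρ := pRho_small hzlt hwlt hρ₀pos hρ₀lt1 hwb
  have hdist : ‖w - z‖ ≤ 4 * ρ₀ * (1 - ‖z‖) :=
    dist_le_of_pRho hzlt hwlt hρ₀pos hρ₀half hρ
  obtain ⟨t, ht⟩ : ∃ t : ℝ, t = ‖z‖ := ⟨_, rfl⟩
  have ht0 : 0 ≤ t := ht ▸ norm_nonneg z
  have ht1 : t < 1 := ht ▸ hzlt
  -- series representations
  obtain ⟨a, haa⟩ : ∃ a : ℂ, a = w * (starRingEnd ℂ) z := ⟨_, rfl⟩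
  obtain ⟨b, hbb⟩ : ∃ b : ℂ, b = ((t^2 : ℝ) : ℂ) := ⟨_, rfl⟩
  have hrep : wBk ω z w = ∑' k : ℕ, a ^ k * ((c k : ℝ) : ℂ) := by
    rw [haa]
    unfold wBk
    rw [← tsum_mul_left]
    congr 1
    funext k
    have hWne : (wMom ω (2*k+1) : ℂ) ≠ 0 := by
      exact_mod_cast ne_of_gt (wMom_pos hω (2*k+1))
    rw [hc]
    push_cast
    have h2 : (2 : ℂ) * (wMom ω (2*k+1) : ℂ) ≠ 0 := by
      refine mul_ne_zero (by norm_num) hWne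
    field_simp
  have hdiagrep : wBkDiag ω z = ∑' k : ℕ, (t ^ 2) ^ k * c k := by
    unfold wBkDiag
    congr 1
    funext k
    rw [hc, ht, ← pow_mul, div_eq_mul_inv]
  have hsum_t2 : Summable (fun k : ℕ => (t^2)^k * c k) :=
    c_summable hcpos hcmono hE1 hdouble (by positivity) (by nlinarith)
  have hsum_t : Summable (fun k : ℕ => t^k * c k) :=
    c_summable hcpos hcmono hE1 hdouble ht0 ht1
  have hS0 : 0 ≤ wBkDiag ω z := by
    rw [hdiagrep]; exact tsum_nonneg (fun k => mul_nonneg (by positivity) (hcpos k).le)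
  have hdiagC : ((wBkDiag ω z : ℝ) : ℂ) = ∑' k : ℕ, b ^ k * ((c k : ℝ) : ℂ) := by
    rw [hbb, hdiagrep, Complex.ofReal_tsum]
    congr 1; funext k; push_cast; ring
  -- the square-root substitution
  obtain ⟨u, hu⟩ : ∃ u : ℝ, u = Real.sqrt t := ⟨_, rfl⟩
  have hu0 : 0 ≤ u := hu ▸ Real.sqrt_nonneg t
  have hu2 : u^2 = t := by rw [hu]; exact Real.sq_sqrt ht0
  have hu1 : u < 1 := by nlinarith
  have hu21 : u^2 < 1 := by nlinarith
  have hu40 : (0:ℝ) ≤ (u^2)^2 := by positivity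
  have hu41 : (u^2)^2 < 1 := by nlinarith
  -- the derivative-type sum bound
  have hSd : (∑' k : ℕ, (k:ℝ) * t ^ k * c k)
      ≤ (2 / (1 - t)) * (4 * D^4 * wBkDiag ω z) := by
    have e1 : (∑' k : ℕ, (k:ℝ) * t ^ k * c k) = ∑' k : ℕ, (k:ℝ) * (u^2) ^ k * c k := by
      congr 1; funext k; rw [hu2]
    have e2 := U_deriv hcpos hcmono hE1 hdouble hu0 hu1
    have e3 := U_halve hcpos hcmono hE1 hdouble hu0 hu1
    have e4 := U_halve hcpos hcmono hE1 hdouble (by positivity : (0:ℝ) ≤ u^2) hu21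
    have e5 : (∑' k : ℕ, ((u^2)^2) ^ k * c k) = wBkDiag ω z := by
      rw [hdiagrep]; congr 1; funext k; rw [hu2]
    have hUnn : 0 ≤ ∑' k : ℕ, (u^2) ^ k * c k := by
      refine tsum_nonneg (fun k => mul_nonneg (by positivity) (hcpos k).le)
    have hfrac : 1 / (1 - u) ≤ 2 / (1 - t) := by
      rw [div_le_div_iff₀ (by linarith) (by linarith)]
      nlinarith
    have hsum_u : 0 ≤ ∑' k : ℕ, u ^ k * c k := by
      refine tsum_nonneg (fun k => mul_nonneg (by positivity) (hcpos k).le)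
    have hEnn : (0:ℝ) ≤ 2 * E := by linarith
    calc (∑' k : ℕ, (k:ℝ) * t ^ k * c k) = ∑' k : ℕ, (k:ℝ) * (u^2) ^ k * c k := e1
      _ ≤ (1 / (1 - u)) * ∑' k : ℕ, u ^ k * c k := e2
      _ ≤ (2 / (1 - t)) * ∑' k : ℕ, u ^ k * c k := mul_le_mul_of_nonneg_right hfrac hsum_u
      _ ≤ (2 / (1 - t)) * (2 * E * ∑' k : ℕ, (u^2) ^ k * c k) := by
          refine mul_le_mul_of_nonneg_left e3 (div_nonneg (by norm_num) (by linarith))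
      _ ≤ (2 / (1 - t)) * (2 * E * (2 * E * ∑' k : ℕ, ((u^2)^2) ^ k * c k)) := by
          refine mul_le_mul_of_nonneg_left (mul_le_mul_of_nonneg_left e4 hEnn)
            (div_nonneg (by norm_num) (by linarith))
      _ = (2 / (1 - t)) * (4 * D^4 * wBkDiag ω z) := by
          rw [e5, hE]; ring
  -- termwise bound for the difference
  have habst : ‖a‖ ≤ t := by
    rw [haa, norm_mul, Complex.norm_conj, ← ht]
    nlinarith [norm_nonneg w, ht0]
  have habsb : ‖b‖ ≤ t := by
    rw [hbb, Complex.norm_real, Real.norm_eq_abs, _root_.abs_of_nonneg (by positivity)]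
    nlinarith
  have habmb : ‖a - b‖ ≤ t * ‖w - z‖ := by
    have hbz : b = (starRingEnd ℂ) z * z := by
      rw [hbb, mul_comm, Complex.mul_conj]
      rw [Complex.normSq_eq_norm_sq, ← ht]
    have e1 : a - b = (starRingEnd ℂ) z * (w - z) := by rw [haa, hbz]; ring
    rw [e1, norm_mul, Complex.norm_conj, ← ht]
  have hsumA : Summable (fun k : ℕ => a^k * ((c k : ℝ) : ℂ)) := by
    refine Summable.of_norm ?_
    refine Summable.of_nonneg_of_le (fun k => norm_nonneg _) (fun k => ?_) hsum_t
    rw [norm_mul, norm_pow, Complex.norm_real, Real.norm_eq_abs,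
      _root_.abs_of_nonneg (hcpos k).le]
    refine mul_le_mul_of_nonneg_right (pow_le_pow_left₀ (norm_nonneg a) habst k) (hcpos k).le
  have hsumB : Summable (fun k : ℕ => b^k * ((c k : ℝ) : ℂ)) := by
    refine Summable.of_norm ?_
    refine Summable.of_nonneg_of_le (fun k => norm_nonneg _) (fun k => ?_) hsum_t
    rw [norm_mul, norm_pow, Complex.norm_real, Real.norm_eq_abs,
      _root_.abs_of_nonneg (hcpos k).le]
    refine mul_le_mul_of_nonneg_right (pow_le_pow_left₀ (norm_nonneg b) habsb k) (hcpos k).le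
  have hsub : wBk ω z w - ((wBkDiag ω z : ℝ) : ℂ) = ∑' k : ℕ, (a^k - b^k) * ((c k : ℝ) : ℂ) := by
    rw [hrep, hdiagC, ← Summable.tsum_sub hsumA hsumB]
    congr 1; funext k; rw [haa, hbb]; ring
  have htermB : ∀ k : ℕ, ‖(a^k - b^k) * ((c k : ℝ) : ℂ)‖
      ≤ ‖w - z‖ * ((k:ℝ) * t^k * c k) := by
    intro k
    rw [norm_mul, Complex.norm_real, Real.norm_eq_abs, _root_.abs_of_nonneg (hcpos k).le]
    have hk : ‖a^k - b^k‖ ≤ (k:ℝ) * t^(k-1) * ‖a - b‖ := by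
      have hfact := geom_sum₂_mul a b k
      rw [← hfact, norm_mul]
      have hsum : ‖∑ i ∈ Finset.range k, a ^ i * b ^ (k - 1 - i)‖ ≤ (k:ℝ) * t^(k-1) := by
        calc ‖∑ i ∈ Finset.range k, a ^ i * b ^ (k - 1 - i)‖
            ≤ ∑ i ∈ Finset.range k, ‖a ^ i * b ^ (k - 1 - i)‖ := norm_sum_le _ _
          _ ≤ ∑ i ∈ Finset.range k, t^(k-1) := by
              refine Finset.sum_le_sum (fun i hi => ?_)
              rw [norm_mul, norm_pow, norm_pow]
              have h1 : ‖a‖ ^ i ≤ t ^ i :=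
                pow_le_pow_left₀ (norm_nonneg a) habst i
              have h2 : ‖b‖ ^ (k-1-i) ≤ t ^ (k-1-i) :=
                pow_le_pow_left₀ (norm_nonneg b) habsb _
              have h3 : t ^ i * t ^ (k-1-i) = t ^ (k-1) := by
                rw [← pow_add]
                congr 1
                have := Finset.mem_range.1 hi
                omega
              calc ‖a‖ ^ i * ‖b‖ ^ (k-1-i) ≤ t ^ i * t ^ (k-1-i) := by
                    refine mul_le_mul h1 h2 (by positivity) (by positivity)
                _ = t ^ (k-1) := h3
          _ = (k:ℝ) * t^(k-1) := by
              rw [Finset.sum_const, Finset.card_range, nsmul_eq_mul]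
      have hCabs : ‖a - b‖ = ‖a - b‖ := rfl
      calc ‖∑ i ∈ Finset.range k, a ^ i * b ^ (k - 1 - i)‖ * ‖a - b‖
          ≤ ((k:ℝ) * t^(k-1)) * ‖a - b‖ :=
            mul_le_mul_of_nonneg_right hsum (norm_nonneg _)
        _ = (k:ℝ) * t^(k-1) * ‖a - b‖ := by rw [hCabs]
    rcases Nat.eq_zero_or_pos k with hk0 | hk1
    · subst hk0
      simp
    · have e1 : t^(k-1) * t = t^k := by
        rw [← pow_succ]
        congr 1
        omega
      have hc0 := (hcpos k).le
      have habnn := norm_nonneg (a - b)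
      have hwznn := norm_nonneg (w - z)
      calc ‖a^k - b^k‖ * c k ≤ ((k:ℝ) * t^(k-1) * ‖a - b‖) * c k :=
            mul_le_mul_of_nonneg_right hk hc0
        _ ≤ ((k:ℝ) * t^(k-1) * (t * ‖w - z‖)) * c k := by
            refine mul_le_mul_of_nonneg_right (mul_le_mul_of_nonneg_left habmb (by positivity)) hc0
        _ = ‖w - z‖ * ((k:ℝ) * (t^(k-1) * t) * c k) := by ring
        _ = ‖w - z‖ * ((k:ℝ) * t^k * c k) := by rw [e1]
  have hsumDK : Summable (fun k : ℕ => (k:ℝ) * t ^ k * c k) := by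
    have h := U_deriv_summable hcpos hcmono hE1 hdouble hu0 hu1
    refine h.congr (fun k => ?_)
    rw [hu2]
  have hsumN : Summable (fun k : ℕ => ‖(a^k - b^k) * ((c k : ℝ) : ℂ)‖) := by
    refine Summable.of_nonneg_of_le (fun k => norm_nonneg _) htermB ?_
    exact hsumDK.mul_left _
  have hdiff : ‖wBk ω z w - ((wBkDiag ω z : ℝ) : ℂ)‖ ≤ (1/2) * wBkDiag ω z := by
    have h1 : ‖wBk ω z w - ((wBkDiag ω z : ℝ) : ℂ)‖
        ≤ ∑' k : ℕ, ‖(a^k - b^k) * ((c k : ℝ) : ℂ)‖ := by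
      rw [hsub]
      exact norm_tsum_le_tsum_norm hsumN
    have h2 : (∑' k : ℕ, ‖(a^k - b^k) * ((c k : ℝ) : ℂ)‖)
        ≤ ∑' k : ℕ, ‖w - z‖ * ((k:ℝ) * t^k * c k) :=
      Summable.tsum_le_tsum htermB hsumN (hsumDK.mul_left _)
    have h3 : (∑' k : ℕ, ‖w - z‖ * ((k:ℝ) * t^k * c k))
        = ‖w - z‖ * ∑' k : ℕ, (k:ℝ) * t^k * c k := tsum_mul_left
    have h4 : ‖w - z‖ * (∑' k : ℕ, (k:ℝ) * t^k * c k)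
        ≤ ‖w - z‖ * ((2 / (1 - t)) * (4 * D^4 * wBkDiag ω z)) :=
      mul_le_mul_of_nonneg_left hSd (norm_nonneg _)
    have h5 : ‖w - z‖ * ((2 / (1 - t)) * (4 * D^4 * wBkDiag ω z))
        ≤ (4 * ρ₀ * (1 - t)) * ((2 / (1 - t)) * (4 * D^4 * wBkDiag ω z)) := by
      refine mul_le_mul_of_nonneg_right (ht ▸ hdist) ?_
      have h2t : (0:ℝ) ≤ 2 / (1 - t) := div_nonneg (by norm_num) (by linarith)
      exact mul_nonneg h2t (mul_nonneg (by positivity) hS0)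
    have h6 : (4 * ρ₀ * (1 - t)) * ((2 / (1 - t)) * (4 * D^4 * wBkDiag ω z))
        = 32 * D^4 * ρ₀ * wBkDiag ω z := by
      have h1t : (1:ℝ) - t ≠ 0 := by linarith
      field_simp
      ring
    have h7 : 32 * D^4 * ρ₀ * wBkDiag ω z = (1/2) * wBkDiag ω z := by
      rw [hρ₀def]
      have hDne : (64 * D^4) ≠ 0 := ne_of_gt (by nlinarith)
      field_simp
      ring
    calc ‖wBk ω z w - ((wBkDiag ω z : ℝ) : ℂ)‖ ≤ _ := h1
      _ ≤ _ := h2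
      _ = _ := h3
      _ ≤ _ := h4
      _ ≤ _ := h5
      _ = _ := h6
      _ = (1/2) * wBkDiag ω z := h7
  -- conclude
  have hnormdiag : ‖((wBkDiag ω z : ℝ) : ℂ)‖ = wBkDiag ω z := by
    rw [Complex.norm_real, Real.norm_eq_abs, _root_.abs_of_nonneg hS0]
  have hlow : (2:ℝ)⁻¹ * wBkDiag ω z ≤ ‖wBk ω z w‖ := by
    have h1 : ‖((wBkDiag ω z : ℝ) : ℂ)‖ - ‖wBk ω z w - ((wBkDiag ω z : ℝ) : ℂ)‖
        ≤ ‖wBk ω z w‖ := by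
      have := norm_sub_norm_le (((wBkDiag ω z : ℝ) : ℂ)) (((wBkDiag ω z : ℝ) : ℂ) - wBk ω z w)
      have e : ((wBkDiag ω z : ℝ) : ℂ) - (((wBkDiag ω z : ℝ) : ℂ) - wBk ω z w) = wBk ω z w := by ring
      rw [e] at this
      have e2 : ‖((wBkDiag ω z : ℝ) : ℂ) - wBk ω z w‖ = ‖wBk ω z w - ((wBkDiag ω z : ℝ) : ℂ)‖ :=
        norm_sub_rev _ _
      linarith [this, e2]
    rw [hnormdiag] at h1
    linarith [hdiff, h1]
  have hhigh : ‖wBk ω z w‖ ≤ 2 * wBkDiag ω z := by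
    have h1 : ‖wBk ω z w‖ ≤ ‖((wBkDiag ω z : ℝ) : ℂ)‖ + ‖wBk ω z w - ((wBkDiag ω z : ℝ) : ℂ)‖ := by
      have := norm_add_le (((wBkDiag ω z : ℝ) : ℂ)) (wBk ω z w - ((wBkDiag ω z : ℝ) : ℂ))
      have e : ((wBkDiag ω z : ℝ) : ℂ) + (wBk ω z w - ((wBkDiag ω z : ℝ) : ℂ)) = wBk ω z w := by ring
      rw [e] at this
      exact this
    rw [hnormdiag] at h1
    linarith [hdiff, h1]
  exact ⟨hlow, hhigh⟩


end
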